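/- For each n ≥ 2, the polynomials q_n satisfy the three-term recurrence q_n(x) + 2x · q_{n-1}(x) + (1 + x²) · q_{n-2}(x) = 0 for all real x. -/
import Mathlib


open Finset Polynomial Real

noncomputable def q (n : ℕ) (x : ℝ) : ℝ :=
  (-1 : ℝ)^n * ∑ k ∈ (Finset.range (n+1)).filter (fun k => Even k),
    ((n+1).choose (k+1) : ℝ) * (-1 : ℝ)^(k/2) * x^(n-k)

lemma q_closed (n : ℕ) (x : ℝ) :
    q n x = (-1:ℝ)^n * (((x:ℂ) + Complex.I)^(n+1)).im := by
  unfold q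
  congr 1
  rw [add_pow, Complex.im_sum]
  rw [← Finset.sum_filter_of_ne (p := fun m => ¬ Even (n+1-m))
    (f := fun m => ((x:ℂ)^m * Complex.I^(n+1-m) * ((n+1).choose m : ℂ)).im)]
  · refine Finset.sum_nbij' (fun k => n - k) (fun m => n - m) ?_ ?_ ?_ ?_ ?_
    · intro k hk
      simp only [Finset.mem_filter, Finset.mem_range] at hk ⊢
      obtain ⟨hk1, hk2⟩ := hk
      obtain ⟨a, rfl⟩ := hk2
      refine ⟨by omega, ?_⟩
      rintro ⟨b, hb⟩
      omega
    · intro m hm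
      simp only [Finset.mem_filter, Finset.mem_range] at hm ⊢
      obtain ⟨hm1, hm2⟩ := hm
      rw [Nat.not_even_iff_odd] at hm2
      obtain ⟨t, ht⟩ := hm2
      exact ⟨by omega, ⟨t, by omega⟩⟩
    · intro k hk
      simp only [Finset.mem_filter, Finset.mem_range] at hk
      show n - (n - k) = k
      omega
    · intro m hm
      simp only [Finset.mem_filter, Finset.mem_range] at hm
      obtain ⟨hm1, hm2⟩ := hm
      rw [Nat.not_even_iff_odd] at hm2
      obtain ⟨t, ht⟩ := hm2
      show n - (n - m) = m
      omega
    · intro k hk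
      simp only [Finset.mem_filter, Finset.mem_range] at hk
      obtain ⟨hk1, hk2⟩ := hk
      have hkn : k ≤ n := by omega
      have h1 : n + 1 - (n - k) = k + 1 := by omega
      have h2 : (n+1).choose (n - k) = (n+1).choose (k+1) := by
        have := Nat.choose_symm (n := n+1) (k := k+1) (by omega)
        rwa [show n + 1 - (k+1) = n - k by omega] at this
      rw [h1, h2]
      obtain ⟨j, rfl⟩ := hk2
      have hI : Complex.I ^ (j + j + 1) = ((-1:ℝ)^j : ℂ) * Complex.I := by
        rw [show j + j + 1 = 2*j + 1 by ring, pow_succ, pow_mul, Complex.I_sq]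
        push_cast
        ring
      rw [hI]
      have hre : (x:ℂ)^(n - (j+j)) * (((-1:ℝ)^j : ℂ) * Complex.I) * ((n+1).choose (j+j+1) : ℂ)
          = ((x^(n - (j+j)) * (-1:ℝ)^j * ((n+1).choose (j+j+1) : ℝ) : ℝ) : ℂ) * Complex.I := by
        push_cast
        ring
      rw [hre]
      simp only [Complex.mul_im, Complex.ofReal_re, Complex.ofReal_im,
        Complex.I_re, Complex.I_im]
      rw [show (j + j) / 2 = j by omega]
      ring
  · intro m hm hne
    intro hc
    apply hne
    obtain ⟨t, ht⟩ := hc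
    have hI : Complex.I ^ (n + 1 - m) = ((-1:ℝ)^t : ℂ) := by
      rw [ht, show t + t = 2 * t by ring, pow_mul, Complex.I_sq]
      push_cast
      ring
    rw [hI]
    have hre : (x:ℂ)^m * (((-1:ℝ)^t : ℂ)) * ((n+1).choose m : ℂ)
        = ((x^m * (-1:ℝ)^t * ((n+1).choose m : ℝ) : ℝ) : ℂ) := by
      push_cast
      ring
    rw [hre, Complex.ofReal_im]

theorem q_recurrence (n : ℕ) (hn : 2 ≤ n) (x : ℝ) :
    q n x + 2 * x * q (n - 1) x + (1 + x^2) * q (n - 2) x = 0 := by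
  obtain ⟨m, rfl⟩ : ∃ m, n = m + 2 := ⟨n - 2, by omega⟩
  have e1 : m + 2 - 1 = m + 1 := by omega
  have e2 : m + 2 - 2 = m := by omega
  rw [e1, e2, q_closed, q_closed, q_closed]
  set z : ℂ := (x:ℂ) + Complex.I with hz
  have hfac : z^(m+3) - ((2*x : ℝ) : ℂ) * z^(m+2) + ((1 + x^2 : ℝ) : ℂ) * z^(m+1) = 0 := by
    have h2 : z^2 - ((2*x : ℝ) : ℂ) * z + ((1 + x^2 : ℝ) : ℂ) = 0 := by
      rw [hz]
      push_cast
      linear_combination Complex.I_sq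
    calc z^(m+3) - ((2*x : ℝ) : ℂ) * z^(m+2) + ((1 + x^2 : ℝ) : ℂ) * z^(m+1)
        = z^(m+1) * (z^2 - ((2*x : ℝ) : ℂ) * z + ((1 + x^2 : ℝ) : ℂ)) := by ring
      _ = 0 := by rw [h2]; ring
  have him : (z^(m+3)).im - (2*x) * (z^(m+2)).im + (1 + x^2) * (z^(m+1)).im = 0 := by
    have h := congrArg Complex.im hfac
    simp only [Complex.sub_im, Complex.add_im, Complex.mul_im, Complex.ofReal_re,
      Complex.ofReal_im, Complex.zero_im, zero_mul, add_zero] at h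
    linear_combination h
  have hp3 : m + 2 + 1 = m + 3 := by omega
  have hp2 : m + 1 + 1 = m + 2 := by omega
  rw [hp3, hp2]
  linear_combination ((-1:ℝ)^m) * him
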